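/- Fix real numbers a < b, an integer n ≥ 1, and values V₁, …, Vₙ ∈ ℝ. With Xᵢⁿ(t) = a + ((b−a)/(4n)) Σ_{j=1}^{i} (2 + V_j t)² 1_{{2 + V_j t > 0}} and qⁿ(t,x) = Σ_{i=1}^{n} (2V_i/(2 + V_i t)) 1_{{Xᵢ₋₁ⁿ(t) < x < Xᵢⁿ(t) and 2 + V_i t > 0}}, one has for every t ≥ 0: ∫_ℝ qⁿ(t,x)² dx = ((b−a)/n) Σ_{i=1}^{n} V_i² 1_{{2 + V_i t > 0}} ≤ ((b−a)/n) Σ_{i=1}^{n} V_i² = ∫_ℝ qⁿ(0,x)² dx. In particular the energy t ↦ ‖qⁿ(t)‖²_{L²(ℝ)} is nonincreasing, and it drops by ((b−a)/n) V_i² exactly at each wave-breaking time t = −2/V_i with V_i < 0. -/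

import Mathlib

open MeasureTheory Real Set Filter

lemma sum_sq_of_orth (s : Finset ℕ) (f : ℕ → ℝ)
    (h : ∀ i ∈ s, ∀ j ∈ s, i ≠ j → f i * f j = 0) :
    (∑ i ∈ s, f i)^2 = ∑ i ∈ s, (f i)^2 := by
  rw [sq, Finset.sum_mul_sum]
  refine Finset.sum_congr rfl fun i hi => ?_
  rw [Finset.sum_eq_single i (fun j hj hne => h i hi j hj hne.symm)
    (fun h' => absurd hi h'), sq]

lemma energy_formula (a b : ℝ) (hab : a < b) (n : ℕ) (hn : 1 ≤ n) (V : ℕ → ℝ)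
    (X : ℕ → ℝ → ℝ)
    (hX : ∀ i t, X i t = a + ((b - a) / (4 * n))
      * ∑ j ∈ Finset.range i,
          (2 + V j * t)^2 * (if 0 < 2 + V j * t then (1:ℝ) else 0))
    (q : ℝ → ℝ → ℝ)
    (hq : ∀ t x, q t x = ∑ i ∈ Finset.range n,
      (2 * V i / (2 + V i * t))
        * (if X i t < x ∧ x < X (i+1) t ∧ 0 < 2 + V i * t then (1:ℝ) else 0))
    (t : ℝ) :
    ∫ x : ℝ, (q t x)^2
      = ((b - a) / n) * ∑ i ∈ Finset.range n,
          (V i)^2 * (if 0 < 2 + V i * t then (1:ℝ) else 0) := by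
  have hn0 : (n:ℝ) ≠ 0 := Nat.cast_ne_zero.2 (by omega)
  have hcoef : (0:ℝ) ≤ (b - a) / (4 * n) := div_nonneg (by linarith) (by positivity)
  have hmono : ∀ i j : ℕ, i ≤ j → X i t ≤ X j t := by
    intro i j hij
    rw [hX, hX]
    refine add_le_add_right (mul_le_mul_of_nonneg_left ?_ hcoef) a
    refine Finset.sum_le_sum_of_subset_of_nonneg
      (Finset.range_subset_range.2 hij) fun k _ _ => ?_
    positivity
  have hlen : ∀ i : ℕ, X (i+1) t - X i t
      = (b - a) / (4 * n) * ((2 + V i * t)^2 * (if 0 < 2 + V i * t then (1:ℝ) else 0)) := by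
    intro i
    rw [hX, hX, Finset.sum_range_succ]
    ring
  set d : ℕ → ℝ := fun i => if 0 < 2 + V i * t then (2 * V i / (2 + V i * t))^2 else 0 with hd
  have hpt : ∀ x : ℝ, (q t x)^2
      = ∑ i ∈ Finset.range n, (Ioo (X i t) (X (i+1) t)).indicator (fun _ => d i) x := by
    intro x
    rw [hq]
    rw [sum_sq_of_orth]
    · refine Finset.sum_congr rfl fun i _ => ?_
      by_cases hc : X i t < x ∧ x < X (i+1) t ∧ 0 < 2 + V i * t
      · rw [if_pos hc, Set.indicator_of_mem (mem_Ioo.2 ⟨hc.1, hc.2.1⟩), hd]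
        simp [hc.2.2]
      · rw [if_neg hc, mul_zero]
        by_cases hm : x ∈ Ioo (X i t) (X (i+1) t)
        · rw [Set.indicator_of_mem hm, hd]
          have : ¬ (0 < 2 + V i * t) := fun h => hc ⟨(mem_Ioo.1 hm).1, (mem_Ioo.1 hm).2, h⟩
          simp [this]
        · rw [Set.indicator_of_notMem hm]; simp
    · intro i _ j _ hij
      by_cases h1 : X i t < x ∧ x < X (i+1) t ∧ 0 < 2 + V i * t
      · by_cases h2 : X j t < x ∧ x < X (j+1) t ∧ 0 < 2 + V j * t
        · exfalso
          rcases lt_or_gt_of_ne hij with h | h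
          · have := hmono (i+1) j h
            linarith [h1.2.1, h2.1]
          · have := hmono (j+1) i h
            linarith [h2.2.1, h1.1]
        · simp [if_neg h2]
      · simp [if_neg h1]
  have hint : ∀ i ∈ Finset.range n,
      Integrable (fun x => (Ioo (X i t) (X (i+1) t)).indicator (fun _ => d i) x) := by
    intro i _
    rw [MeasureTheory.integrable_indicator_iff measurableSet_Ioo]
    exact (integrableOn_const_iff).2 (Or.inr measure_Ioo_lt_top)
  calc ∫ x : ℝ, (q t x)^2
      = ∫ x : ℝ, ∑ i ∈ Finset.range n,
          (Ioo (X i t) (X (i+1) t)).indicator (fun _ => d i) x := by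
        exact integral_congr_ae (Filter.Eventually.of_forall hpt)
    _ = ∑ i ∈ Finset.range n, ∫ x : ℝ,
          (Ioo (X i t) (X (i+1) t)).indicator (fun _ => d i) x :=
        integral_finset_sum _ hint
    _ = ∑ i ∈ Finset.range n, (X (i+1) t - X i t) * d i := by
        refine Finset.sum_congr rfl fun i _ => ?_
        rw [integral_indicator_const _ measurableSet_Ioo, measureReal_def, Real.volume_Ioo,
          ENNReal.toReal_ofReal (sub_nonneg.2 (hmono i (i+1) (Nat.le_succ i))),
          smul_eq_mul]
    _ = ∑ i ∈ Finset.range n, ((b - a) / n) * ((V i)^2 * (if 0 < 2 + V i * t then (1:ℝ) else 0)) := by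
        refine Finset.sum_congr rfl fun i _ => ?_
        rw [hlen]
        by_cases hP : 0 < 2 + V i * t
        · have h2 : (2 + V i * t) ≠ 0 := ne_of_gt hP
          simp only [hd, if_pos hP]
          field_simp
          ring
        · simp only [hd, if_neg hP]; ring
    _ = ((b - a) / n) * ∑ i ∈ Finset.range n,
          (V i)^2 * (if 0 < 2 + V i * t then (1:ℝ) else 0) := by
        rw [Finset.mul_sum]
/-- Energy of the explicit dissipative solution of the deterministic
Hunter–Saxton equation with `n`-step initial data:
`∫ qⁿ(t,·)² = ((b−a)/n) Σᵢ Vᵢ² 1_{2+Vᵢt>0} ≤ ((b−a)/n) Σᵢ Vᵢ² = ∫ qⁿ(0,·)²`; the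
energy is nonincreasing on `[0,∞)` and drops at each wave-breaking time `−2/Vᵢ`
(`Vᵢ < 0`) by `((b−a)/n)` times the sum of `Vⱼ²` over the boxes breaking there. -/
theorem box_energy_dissipation
    (a b : ℝ) (hab : a < b) (n : ℕ) (hn : 1 ≤ n) (V : ℕ → ℝ)
    (X : ℕ → ℝ → ℝ)
    (hX : ∀ i t, X i t = a + ((b - a) / (4 * n))
      * ∑ j ∈ Finset.range i,
          (2 + V j * t)^2 * (if 0 < 2 + V j * t then (1:ℝ) else 0))
    (q : ℝ → ℝ → ℝ)
    (hq : ∀ t x, q t x = ∑ i ∈ Finset.range n,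
      (2 * V i / (2 + V i * t))
        * (if X i t < x ∧ x < X (i+1) t ∧ 0 < 2 + V i * t then (1:ℝ) else 0)) :
    (∀ t : ℝ, 0 ≤ t →
      ∫ x : ℝ, (q t x)^2
        = ((b - a) / n) * ∑ i ∈ Finset.range n,
            (V i)^2 * (if 0 < 2 + V i * t then (1:ℝ) else 0)) ∧
    (∀ t : ℝ, 0 ≤ t →
      ((b - a) / n) * ∑ i ∈ Finset.range n,
            (V i)^2 * (if 0 < 2 + V i * t then (1:ℝ) else 0)
        ≤ ((b - a) / n) * ∑ i ∈ Finset.range n, (V i)^2) ∧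
    (((b - a) / n) * ∑ i ∈ Finset.range n, (V i)^2 = ∫ x : ℝ, (q 0 x)^2) ∧
    AntitoneOn (fun t => ∫ x : ℝ, (q t x)^2) (Set.Ici 0) ∧
    (∀ i < n, V i < 0 →
      Filter.Tendsto (fun t => ∫ x : ℝ, (q t x)^2)
        (nhdsWithin (-2 / V i) (Set.Iio (-2 / V i)))
        (nhds ((∫ x : ℝ, (q (-2 / V i) x)^2)
          + ((b - a) / n)
              * ∑ j ∈ (Finset.range n).filter (fun j => 2 + V j * (-2 / V i) = 0),
                  (V j)^2))) := by
  have E := energy_formula a b hab n hn V X hX q hq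
  have hcn : (0:ℝ) ≤ (b - a) / n := div_nonneg (by linarith) (by positivity)
  -- monotonicity of indicators
  have key : ∀ (i : ℕ) (s t : ℝ), 0 ≤ s → s ≤ t → 0 < 2 + V i * t → 0 < 2 + V i * s := by
    intro i s t hs hst hlt
    rcases le_or_gt 0 (V i) with h | h
    · nlinarith
    · nlinarith
  have sumle : ∀ (s t : ℝ), 0 ≤ s → s ≤ t →
      ((b - a) / n) * ∑ i ∈ Finset.range n,
          (V i)^2 * (if 0 < 2 + V i * t then (1:ℝ) else 0)
        ≤ ((b - a) / n) * ∑ i ∈ Finset.range n,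
          (V i)^2 * (if 0 < 2 + V i * s then (1:ℝ) else 0) := by
    intro s t hs hst
    refine mul_le_mul_of_nonneg_left (Finset.sum_le_sum fun i _ => ?_) hcn
    refine mul_le_mul_of_nonneg_left ?_ (sq_nonneg _)
    split_ifs with h1 h2 h2
    · exact le_refl _
    · exact absurd (key i s t hs hst h1) h2
    · norm_num
    · exact le_refl _
  refine ⟨fun t _ => E t, fun t ht => ?_, ?_, ?_, ?_⟩
  · have := sumle 0 t le_rfl ht
    simpa using this
  · rw [E 0]
    simp
  · intro s hs t ht hst
    simp only
    rw [E s, E t]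
    exact sumle s t hs hst
  · intro i hi hVi
    set t₀ : ℝ := -2 / V i with ht₀
    have ht₀pos : 0 < t₀ := div_pos_of_neg_of_neg (by norm_num) hVi
    -- eventual equality of each indicator
    have hev : ∀ j ∈ Finset.range n, ∀ᶠ t in nhdsWithin t₀ (Set.Iio t₀),
        (if 0 < 2 + V j * t then (1:ℝ) else 0)
          = (if 0 < 2 + V j * t₀ then (1:ℝ) else 0)
            + (if 2 + V j * t₀ = 0 then (1:ℝ) else 0) := by
      intro j _
      rcases lt_trichotomy (2 + V j * t₀) 0 with h | h | h
      · have hcont : Continuous fun t : ℝ => 2 + V j * t := continuous_const.add (continuous_const.mul continuous_id)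
        have : ∀ᶠ t in nhds t₀, 2 + V j * t < 0 :=
          (hcont.tendsto t₀).eventually (eventually_lt_nhds h)
        filter_upwards [nhdsWithin_le_nhds this] with t hlt
        rw [if_neg (by linarith), if_neg (by linarith), if_neg (by linarith)]
        norm_num
      · have hVj : V j < 0 := by
          rcases le_or_gt 0 (V j) with h' | h'
          · nlinarith
          · exact h'
        filter_upwards [self_mem_nhdsWithin] with t htmem
        have htlt : t < t₀ := htmem
        have : V j * t₀ < V j * t := by
          exact mul_lt_mul_of_neg_left htlt hVj
        rw [if_pos (by linarith), if_neg (by linarith), if_pos h]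
        norm_num
      · have hcont : Continuous fun t : ℝ => 2 + V j * t := continuous_const.add (continuous_const.mul continuous_id)
        have : ∀ᶠ t in nhds t₀, 0 < 2 + V j * t :=
          (hcont.tendsto t₀).eventually (eventually_gt_nhds h)
        filter_upwards [nhdsWithin_le_nhds this] with t hlt
        rw [if_pos hlt, if_pos h, if_neg (by linarith)]
        norm_num
    have hallev : ∀ᶠ t in nhdsWithin t₀ (Set.Iio t₀), ∀ j ∈ Finset.range n,
        (if 0 < 2 + V j * t then (1:ℝ) else 0)
          = (if 0 < 2 + V j * t₀ then (1:ℝ) else 0)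
            + (if 2 + V j * t₀ = 0 then (1:ℝ) else 0) :=
      (Filter.eventually_all_finset _).2 hev
    have hevconst : ∀ᶠ t in nhdsWithin t₀ (Set.Iio t₀),
        (∫ x : ℝ, (q t x)^2)
          = (∫ x : ℝ, (q t₀ x)^2)
            + ((b - a) / n)
              * ∑ j ∈ (Finset.range n).filter (fun j => 2 + V j * t₀ = 0), (V j)^2 := by
      filter_upwards [hallev] with t hall
      rw [E t, E t₀]
      have : ∑ j ∈ Finset.range n, (V j)^2 * (if 0 < 2 + V j * t then (1:ℝ) else 0)
          = (∑ j ∈ Finset.range n, (V j)^2 * (if 0 < 2 + V j * t₀ then (1:ℝ) else 0))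
            + ∑ j ∈ Finset.range n, (V j)^2 * (if 2 + V j * t₀ = 0 then (1:ℝ) else 0) := by
        rw [← Finset.sum_add_distrib]
        refine Finset.sum_congr rfl fun j hj => ?_
        rw [hall j hj]
        ring
      rw [this, mul_add]
      have hfil : ∑ j ∈ (Finset.range n).filter (fun j => 2 + V j * t₀ = 0), (V j)^2
          = ∑ j ∈ Finset.range n, (V j)^2 * (if 2 + V j * t₀ = 0 then (1:ℝ) else 0) := by
        rw [Finset.sum_filter]
        refine Finset.sum_congr rfl fun j hj => ?_
        by_cases h : 2 + V j * t₀ = 0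
        · simp [h]
        · simp [h]
      rw [hfil]
    exact Filter.Tendsto.congr' (Filter.EventuallyEq.symm hevconst) tendsto_const_nhds
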